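/- Let p₁, p₂, p₃, p₄ be pairwise distinct primes greater than 3 such that for each i = 1, 2, 3 there exists k_i ∈ ZMod p_i with k_i ≠ 0 for which the elliptic curve y² = x³ + k_i over F_{p_i} has exactly p_{i+1} points (including the point at infinity). If a, b are integers with p₁ = a² + 3b² and a ≡ 2 (mod 3), then p₄ = (a + 2)² + 3b². -/

import Mathlib

/-- The number of `F_p`-rational points, including the point at infinity, of the elliptic curve
`y² = x³ + k` over `F_p`. -/
noncomputable def Npts (p : ℕ) (k : ZMod p) : ℕ :=
  Nat.card (WeierstrassCurve.Affine.Point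
    (WeierstrassCurve.toAffine ⟨0, 0, 0, 0, k⟩))

open Finset WeierstrassCurve.Affine in
lemma count_lemma (p : ℕ) [Fact p.Prime] (hp3 : 3 < p) (k : ZMod p) (hk : k ≠ 0) :
    (Npts p k : ℤ) = p + 1 + ∑ x : ZMod p, quadraticChar (ZMod p) (x ^ 3 + k) := by
  have hp := (Fact.out : p.Prime)
  set W : WeierstrassCurve.Affine (ZMod p) :=
    WeierstrassCurve.toAffine ⟨0, 0, 0, 0, k⟩ with hW
  have h432 : ((432 : ℕ) : ZMod p) ≠ 0 := by
    rw [Ne, ZMod.natCast_eq_zero_iff]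
    intro hdvd
    have h2 : (432 : ℕ) = 2 ^ 4 * 3 ^ 3 := by norm_num
    rw [h2] at hdvd
    rcases (Nat.Prime.dvd_mul hp).mp hdvd with h | h
    · have := Nat.le_of_dvd (by norm_num) (Nat.Prime.dvd_of_dvd_pow hp h)
      omega
    · have := Nat.le_of_dvd (by norm_num) (Nat.Prime.dvd_of_dvd_pow hp h)
      omega
  have hΔ : W.Δ ≠ 0 := by
    have : W.Δ = -432 * k ^ 2 := by
      simp [hW, WeierstrassCurve.Δ, WeierstrassCurve.b₂, WeierstrassCurve.b₄,
        WeierstrassCurve.b₆, WeierstrassCurve.b₈, WeierstrassCurve.toAffine]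
      ring
    rw [this]
    push_cast at h432
    exact mul_ne_zero (by simpa using h432) (pow_ne_zero 2 hk)
  have hEq : ∀ x y : ZMod p, W.Equation x y ↔ y ^ 2 = x ^ 3 + k := by
    intro x y
    rw [equation_iff]
    simp [hW, WeierstrassCurve.toAffine]
  let e : W.Point ≃ Option {xy : ZMod p × ZMod p // xy.2 ^ 2 = xy.1 ^ 3 + k} :=
    { toFun := fun P => match P with
        | .zero => none
        | @WeierstrassCurve.Affine.Point.some _ _ _ x y h => some ⟨(x, y), (hEq x y).mp h.1⟩
      invFun := fun o => match o with
        | none => .zero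
        | some ⟨(x, y), h⟩ => .some x y ((equation_iff_nonsingular_of_Δ_ne_zero (W := W) hΔ).mp ((hEq x y).mpr h))
      left_inv := by rintro (_ | _) <;> rfl
      right_inv := by rintro (_ | ⟨⟨x, y⟩, h⟩) <;> rfl }
  have h1 : Npts p k = Nat.card (Option {xy : ZMod p × ZMod p // xy.2 ^ 2 = xy.1 ^ 3 + k}) :=
    Nat.card_congr e
  rw [h1, Nat.card_eq_fintype_card, Fintype.card_option]
  have h2 : Fintype.card {xy : ZMod p × ZMod p // xy.2 ^ 2 = xy.1 ^ 3 + k}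
      = ∑ x : ZMod p, Fintype.card {y : ZMod p // y ^ 2 = x ^ 3 + k} := by
    rw [Fintype.card_congr (Equiv.subtypeProdEquivSigmaSubtype
      (fun (x y : ZMod p) => y ^ 2 = x ^ 3 + k)), Fintype.card_sigma]
  have h3 : ∀ x : ZMod p, (Fintype.card {y : ZMod p // y ^ 2 = x ^ 3 + k} : ℤ)
      = quadraticChar (ZMod p) (x ^ 3 + k) + 1 := by
    intro x
    have := quadraticChar_card_sqrts (by
      rw [ZMod.ringChar_zmod_n]; omega) (x ^ 3 + k)
    rw [← this, Set.toFinset_card]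
    congr 1
  rw [h2]
  push_cast
  rw [Finset.sum_congr rfl (fun x _ => h3 x)]
  rw [Finset.sum_add_distrib]
  simp [ZMod.card]
  ring


open Finset in
lemma sum_cube_char_eq_zero (p : ℕ) [Fact p.Prime] (hp3 : 3 < p) (hp2 : p % 3 = 2) (k : ZMod p) :
    ∑ x : ZMod p, quadraticChar (ZMod p) (x ^ 3 + k) = 0 := by
  have hp := (Fact.out : p.Prime)
  -- cube map is bijective
  have hinj : Function.Injective (fun x : ZMod p => x ^ 3) := by
    intro x y hxy
    simp only at hxy
    by_cases hy : y = 0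
    · subst hy
      simpa [pow_eq_zero_iff] using hxy
    · have hx : x ≠ 0 := by
        intro hx0; subst hx0
        exact hy (by simpa [pow_eq_zero_iff, eq_comm] using hxy)
      -- work with units
      lift x to (ZMod p)ˣ using Ne.isUnit hx with X
      lift y to (ZMod p)ˣ using Ne.isUnit hy with Y
      have h3 : X ^ 3 = Y ^ 3 := by
        ext; push_cast; exact hxy
      have hZ : (X * Y⁻¹) ^ 3 = 1 := by
        rw [mul_pow, h3, inv_pow, mul_inv_cancel]
      have hord : orderOf (X * Y⁻¹) ∣ 3 := orderOf_dvd_of_pow_eq_one hZ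
      have hcard : orderOf (X * Y⁻¹) ∣ p - 1 := by
        have := orderOf_dvd_card (x := X * Y⁻¹)
        rwa [Fintype.card_units, ZMod.card] at this
      have h1 : orderOf (X * Y⁻¹) ∣ Nat.gcd 3 (p - 1) := Nat.dvd_gcd hord hcard
      have hgcd : Nat.gcd 3 (p - 1) = 1 := by
        have : ¬ (3 ∣ p - 1) := by omega
        have h3' : Nat.gcd 3 (p - 1) ∣ 3 := Nat.gcd_dvd_left _ _
        have h4' : Nat.gcd 3 (p - 1) ∣ p - 1 := Nat.gcd_dvd_right _ _
        rcases (Nat.prime_three.eq_one_or_self_of_dvd _ h3') with h | h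
        · exact h
        · exfalso; rw [h] at h4'; omega
      rw [hgcd, Nat.dvd_one, orderOf_eq_one_iff] at h1
      have : X = Y := by
        have := mul_eq_one_iff_eq_inv.mp h1
        rwa [inv_inv] at this
      rw [this]
  have hbij : Function.Bijective (fun x : ZMod p => x ^ 3) :=
    Finite.injective_iff_bijective.mp hinj
  calc ∑ x : ZMod p, quadraticChar (ZMod p) (x ^ 3 + k)
      = ∑ u : ZMod p, quadraticChar (ZMod p) (u + k) :=
        Function.Bijective.sum_comp hbij (fun u => quadraticChar (ZMod p) (u + k))
    _ = ∑ w : ZMod p, quadraticChar (ZMod p) w := Fintype.sum_equiv (Equiv.addRight k) _ _ (by simp)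
    _ = 0 := quadraticChar_sum_zero (by rw [ZMod.ringChar_zmod_n]; omega)


open Finset in
lemma cube_fiber_card (p : ℕ) [Fact p.Prime] (hp1 : p % 3 = 1) (ψ : MulChar (ZMod p) ℂ)
    (hψ : orderOf ψ = 3) (u : ZMod p) :
    ((Finset.univ.filter fun x : ZMod p => x ^ 3 = u).card : ℂ) = 1 + ψ u + ψ u ^ 2 := by
  have hp := (Fact.out : p.Prime)
  have hp3 : 3 < p := by
    have h2 := hp.two_le
    have h4 : p ≠ 4 := by rintro rfl; norm_num at hp
    omega
  have hψ3 : ψ ^ 3 = 1 := hψ ▸ pow_orderOf_eq_one ψ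
  by_cases hu : u = 0
  · subst hu
    have : (Finset.univ.filter fun x : ZMod p => x ^ 3 = 0) = {0} := by
      ext x
      simp [pow_eq_zero_iff]
    rw [this]
    simp [MulChar.map_zero]
  · have huU : IsUnit u := Ne.isUnit hu
    have hψu3 : ψ u ^ 3 = 1 := by
      rw [← MulChar.pow_apply' ψ (by norm_num) u, hψ3, MulChar.one_apply huU]
    by_cases hcube : ∃ v : ZMod p, v ^ 3 = u
    · obtain ⟨v, hv⟩ := hcube
      have hv0 : v ≠ 0 := by
        intro h; subst h; exact hu (by simpa using hv.symm)
      have hψu : ψ u = 1 := by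
        rw [← hv, map_pow, ← MulChar.pow_apply' ψ (by norm_num) v, hψ3,
          MulChar.one_apply (Ne.isUnit hv0)]
      rw [hψu]
      norm_num
      haveI : Fact (Nat.Prime 3) := ⟨by norm_num⟩
      obtain ⟨ζ, hζ⟩ := exists_prime_orderOf_dvd_card (G := (ZMod p)ˣ) 3
        (by rw [Fintype.card_units, ZMod.card]; omega)
      set c : ZMod p := (ζ : ZMod p) with hcdef
      have hc3 : c ^ 3 = 1 := by
        have h1 : ζ ^ 3 = 1 := hζ ▸ pow_orderOf_eq_one ζ
        rw [hcdef, ← Units.val_pow_eq_pow_val, h1, Units.val_one]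
      have hc1 : c ≠ 1 := by
        intro h
        have : ζ = 1 := Units.val_eq_one.mp h
        rw [this, orderOf_one] at hζ; omega
      have hcc1 : c ^ 2 ≠ 1 := by
        intro h
        have h2 : ζ ^ 2 = 1 := Units.val_eq_one.mp (by rw [Units.val_pow_eq_pow_val]; exact h)
        have := orderOf_dvd_of_pow_eq_one h2
        rw [hζ] at this; omega
      have hc0 : c ≠ 0 := by
        intro h; rw [h] at hc3; simp at hc3
      have hsub : ({v, c * v, c ^ 2 * v} : Finset (ZMod p)) ⊆
          Finset.univ.filter fun x : ZMod p => x ^ 3 = u := by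
        intro x hx
        simp only [Finset.mem_insert, Finset.mem_singleton] at hx
        rcases hx with rfl | rfl | rfl <;>
          simp only [Finset.mem_filter, Finset.mem_univ, true_and]
        · exact hv
        · calc (c * v) ^ 3 = c ^ 3 * v ^ 3 := by ring
            _ = u := by rw [hc3, hv, one_mul]
        · calc (c ^ 2 * v) ^ 3 = (c ^ 3) ^ 2 * v ^ 3 := by ring
            _ = u := by rw [hc3, hv, one_pow, one_mul]
      have hne1 : v ≠ c * v := by
        intro h
        apply hc1
        have : (1 : ZMod p) * v = c * v := by rw [one_mul]; exact h
        exact (mul_right_cancel₀ hv0 this).symm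
      have hne2 : v ≠ c ^ 2 * v := by
        intro h
        apply hcc1
        have : (1 : ZMod p) * v = c ^ 2 * v := by rw [one_mul]; exact h
        exact (mul_right_cancel₀ hv0 this).symm
      have hne3 : c * v ≠ c ^ 2 * v := by
        intro h
        apply hc1
        have hcc : c = c ^ 2 := mul_right_cancel₀ hv0 h
        have h2 : c * 1 = c * c := by
          calc c * 1 = c := mul_one c
            _ = c ^ 2 := hcc
            _ = c * c := sq c
        exact (mul_left_cancel₀ hc0 h2).symm
      have hcard3 : ({v, c * v, c ^ 2 * v} : Finset (ZMod p)).card = 3 := by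
        rw [Finset.card_insert_of_notMem (by simp [hne1, hne2]),
          Finset.card_insert_of_notMem (by simp [hne3]), Finset.card_singleton]
      have hub : (Finset.univ.filter fun x : ZMod p => x ^ 3 = u).card ≤ 3 := by
        have hsub2 : (Finset.univ.filter fun x : ZMod p => x ^ 3 = u) ⊆
            (Polynomial.nthRoots 3 u).toFinset := by
          intro x hx
          rw [Multiset.mem_toFinset, Polynomial.mem_nthRoots (by norm_num)]
          exact (Finset.mem_filter.mp hx).2
        calc (Finset.univ.filter fun x : ZMod p => x ^ 3 = u).card
            ≤ (Polynomial.nthRoots 3 u).toFinset.card := Finset.card_le_card hsub2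
          _ ≤ Multiset.card (Polynomial.nthRoots 3 u) := Multiset.toFinset_card_le _
          _ ≤ 3 := Polynomial.card_nthRoots 3 u
      have hlb : 3 ≤ (Finset.univ.filter fun x : ZMod p => x ^ 3 = u).card := by
        calc (3 : ℕ) = ({v, c * v, c ^ 2 * v} : Finset (ZMod p)).card := hcard3.symm
          _ ≤ _ := Finset.card_le_card hsub
      have : (Finset.univ.filter fun x : ZMod p => x ^ 3 = u).card = 3 := le_antisymm hub hlb
      rw [this]
      norm_num
    · push_neg at hcube
      have hempty : (Finset.univ.filter fun x : ZMod p => x ^ 3 = u) = ∅ := by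
        ext x; simp [hcube x]
      have hψune : ψ u ≠ 1 := by
        intro hψu
        obtain ⟨g, hg⟩ := IsCyclic.exists_generator (α := (ZMod p)ˣ)
        have hψg3 : ψ (g : ZMod p) ^ 3 = 1 := by
          rw [← MulChar.pow_apply' ψ (by norm_num) (g : ZMod p), hψ3,
            MulChar.one_apply (Units.isUnit g)]
        have hψgne : ψ (g : ZMod p) ≠ 1 := by
          intro hg1
          have hone : ψ = 1 := by
            apply MulChar.ext
            intro A
            obtain ⟨n, hn⟩ := mem_powers_iff_mem_zpowers.mpr (hg A)
            have hn' : g ^ n = A := hn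
            rw [← hn', MulChar.one_apply (Units.isUnit _), Units.val_pow_eq_pow_val,
              map_pow, hg1, one_pow]
          rw [hone, orderOf_one] at hψ; omega
        have hordg : orderOf (ψ (g : ZMod p)) = 3 := orderOf_eq_prime hψg3 hψgne
        lift u to (ZMod p)ˣ using huU with U
        obtain ⟨n, hn⟩ := mem_powers_iff_mem_zpowers.mpr (hg U)
        have hψun : ψ (g : ZMod p) ^ n = 1 := by
          have hn' : g ^ n = U := hn
          rw [← map_pow, ← Units.val_pow_eq_pow_val, hn']
          exact hψu
        have h3n : 3 ∣ n := hordg ▸ orderOf_dvd_of_pow_eq_one hψun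
        obtain ⟨j, hj⟩ := h3n
        apply hcube ((g ^ j : (ZMod p)ˣ) : ZMod p)
        have hgj : (g ^ j) ^ 3 = U := by
          rw [← pow_mul, mul_comm, ← hj]; exact hn
        rw [← Units.val_pow_eq_pow_val, hgj]
      have hfac : (ψ u - 1) * (1 + ψ u + ψ u ^ 2) = 0 := by
        linear_combination hψu3
      rcases mul_eq_zero.mp hfac with h | h
      · exact absurd (sub_eq_zero.mp h) hψune
      · rw [hempty, Finset.card_empty, Nat.cast_zero]
        linear_combination -h

open Finset in
lemma sum_sq_rep (p : ℕ) [Fact p.Prime] (hp3 : 3 < p) (hp1 : p % 3 = 1) (k : ZMod p) (hk : k ≠ 0)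
    (q : ℕ) (hq : q.Prime) (hq3 : 3 < q)
    (hS : (q : ℤ) = p + 1 + ∑ x : ZMod p, quadraticChar (ZMod p) (x ^ 3 + k)) :
    ∃ s : ℤ, 4 * p = ((q : ℤ) - p - 1) ^ 2 + 3 * s ^ 2 := by
  have hp := (Fact.out : p.Prime)
  set S : ℤ := ∑ x : ZMod p, quadraticChar (ZMod p) (x ^ 3 + k) with hSdef
  have hqS : (q : ℤ) - p - 1 = S := by omega
  rw [hqS]
  have hrc : ringChar (ZMod p) = p := ZMod.ringChar_zmod_n p
  have hrc2 : ringChar (ZMod p) ≠ 2 := by omega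
  -- roots of unity
  set μ : ℂ := Complex.exp (2 * Real.pi * Complex.I / 6) with hμdef
  have hprim6 : IsPrimitiveRoot μ 6 := Complex.isPrimitiveRoot_exp 6 (by norm_num)
  have hprim3 : IsPrimitiveRoot (Complex.exp (2 * Real.pi * Complex.I / 3)) 3 :=
    Complex.isPrimitiveRoot_exp 3 (by norm_num)
  -- the cubic character
  obtain ⟨ψ, hψord⟩ := MulChar.exists_mulChar_orderOf (ZMod p)
    (n := 3) (by rw [ZMod.card]; omega) hprim3
  have hψ3 : ψ ^ 3 = 1 := hψord ▸ pow_orderOf_eq_one ψ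
  have hψne : ψ ≠ 1 := fun h => by rw [h, orderOf_one] at hψord; omega
  -- the quadratic character with values in ℂ
  set χ : MulChar (ZMod p) ℂ :=
    (quadraticChar (ZMod p)).ringHomComp (Int.castRingHom ℂ) with hχdef
  have hχapp : ∀ a : ZMod p, χ a = ((quadraticChar (ZMod p) a : ℤ) : ℂ) := fun a => rfl
  have hχne : χ ≠ 1 :=
    (MulChar.ringHomComp_ne_one_iff (RingHom.injective_int _)).mpr (quadraticChar_ne_one hrc2)
  have hχ2 : χ ^ 2 = 1 := by
    apply MulChar.ext
    intro A
    rw [MulChar.pow_apply' _ (by norm_num), MulChar.one_apply A.isUnit, hχapp]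
    have := quadraticChar_sq_one (A.ne_zero)
    rw [← Int.cast_pow, this, Int.cast_one]
  have hψχ : ψ * χ ≠ 1 := by
    intro h
    have h2 : ψ ^ 2 = 1 := by
      calc ψ ^ 2 = ψ ^ 2 * χ ^ 2 := by rw [hχ2, mul_one]
        _ = (ψ * χ) ^ 2 := (mul_pow ψ χ 2).symm
        _ = 1 := by rw [h, one_pow]
    have := orderOf_dvd_of_pow_eq_one h2
    rw [hψord] at this
    omega
  have hψ2inv : ψ ^ 2 = ψ⁻¹ := eq_inv_of_mul_eq_one_left (by rw [← pow_succ]; exact hψ3)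
  have hχinv : χ⁻¹ = χ := (eq_inv_of_mul_eq_one_left (by rw [← sq]; exact hχ2)).symm
  have hψinvne : ψ⁻¹ ≠ 1 := by
    intro h
    exact hψne (by rw [← inv_inv ψ, h, inv_one])
  -- the S sum in ℂ
  have hSC : (S : ℂ) = ∑ x : ZMod p, χ (x ^ 3 + k) := by
    rw [hSdef, Int.cast_sum]
    exact Finset.sum_congr rfl fun x _ => (hχapp _).symm
  -- fiberwise decomposition
  have hfib : ∑ x : ZMod p, χ (x ^ 3 + k)
      = ∑ u : ZMod p, ((univ.filter fun x : ZMod p => x ^ 3 = u).card : ℂ) * χ (u + k) := by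
    rw [← Finset.sum_fiberwise' univ (fun x : ZMod p => x ^ 3) (fun u => χ (u + k))]
    exact Finset.sum_congr rfl fun u _ => by rw [Finset.sum_const, nsmul_eq_mul]
  -- translate sum of χ is zero
  have hT0 : ∑ u : ZMod p, χ (u + k) = 0 := by
    have h1 : ∑ u : ZMod p, χ (u + k) = ∑ w : ZMod p, χ w :=
      Fintype.sum_equiv (Equiv.addRight k) _ _ (by simp)
    rw [h1]
    have h2 : ∑ w : ZMod p, χ w = (((∑ w : ZMod p, quadraticChar (ZMod p) w : ℤ)) : ℂ) := by
      rw [Int.cast_sum]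
      exact Finset.sum_congr rfl fun w _ => hχapp w
    rw [h2, quadraticChar_sum_zero hrc2, Int.cast_zero]
  -- key reindexing identity
  have key : ∀ φ : MulChar (ZMod p) ℂ,
      ∑ u : ZMod p, φ u * χ (u + k) = φ (-k) * χ k * jacobiSum φ χ := by
    intro φ
    have h1 : ∑ u : ZMod p, φ u * χ (u + k)
        = ∑ x : ZMod p, φ (-k * x) * χ (-k * x + k) := by
      refine (Fintype.sum_equiv (Equiv.mulLeft₀ (-k) (neg_ne_zero.mpr hk)) _ _ fun x => ?_).symm
      simp only [Equiv.mulLeft₀_apply]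
    rw [h1, jacobiSum, Finset.mul_sum]
    refine Finset.sum_congr rfl fun x _ => ?_
    have h2 : -k * x + k = k * (1 - x) := by ring
    rw [h2, map_mul φ, map_mul χ]
    ring
  -- assemble
  set J1 : ℂ := jacobiSum ψ χ with hJ1
  set J2 : ℂ := jacobiSum ψ⁻¹ χ⁻¹ with hJ2
  set α : ℂ := ψ (-k) * χ k * J1 with hα
  set β : ℂ := ψ⁻¹ (-k) * χ k * J2 with hβ
  have hsumαβ : (S : ℂ) = α + β := by
    rw [hSC, hfib]
    have h3 : ∀ u : ZMod p, ((univ.filter fun x : ZMod p => x ^ 3 = u).card : ℂ) * χ (u + k)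
        = χ (u + k) + ψ u * χ (u + k) + (ψ ^ 2) u * χ (u + k) := by
      intro u
      rw [cube_fiber_card p hp1 ψ hψord u, MulChar.pow_apply' _ (by norm_num)]
      ring
    rw [Finset.sum_congr rfl fun u _ => h3 u]
    rw [Finset.sum_add_distrib, Finset.sum_add_distrib, hT0, zero_add]
    rw [key ψ, hψ2inv, key ψ⁻¹, hα, hβ, hJ1, hJ2, hχinv]
  -- product is p
  have hψk3 : ψ (-k) ^ 3 = 1 := by
    rw [← MulChar.pow_apply' ψ (by norm_num), hψ3, MulChar.one_apply (Ne.isUnit (neg_ne_zero.mpr hk))]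
  have hψkne : ψ (-k) ≠ 0 := fun h => by rw [h] at hψk3; norm_num at hψk3
  have hχk2 : χ k * χ k = 1 := by
    rw [hχapp]
    rcases quadraticChar_dichotomy hk with h | h <;> rw [h] <;> norm_num
  have hJJ : J1 * J2 = (p : ℂ) := by
    rw [hJ1, hJ2]
    have := jacobiSum_mul_jacobiSum_inv
      (by rw [hrc, ringChar.eq_zero (R := ℂ)]; omega) hψne hχne hψχ
    rw [this, ZMod.card]
  have hαβ : α * β = (p : ℂ) := by
    have hinv : ψ (-k) * ψ⁻¹ (-k) = 1 := by
      rw [MulChar.inv_apply_eq_inv' ψ (-k), mul_inv_cancel₀ hψkne]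
    calc α * β = (ψ (-k) * ψ⁻¹ (-k)) * ((χ k * χ k) * (J1 * J2)) := by rw [hα, hβ]; ring
      _ = (p : ℂ) := by rw [hinv, hχk2, hJJ, one_mul, one_mul]
  -- integrality
  have hψ6 : ψ ^ 6 = 1 := by rw [show (6 : ℕ) = 3 * 2 by norm_num, pow_mul, hψ3, one_pow]
  have hχ6 : χ ^ 6 = 1 := by rw [show (6 : ℕ) = 2 * 3 by norm_num, pow_mul, hχ2, one_pow]
  have hψinv6 : (ψ⁻¹) ^ 6 = 1 := by rw [inv_pow, hψ6, inv_one]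
  have hχmem : χ k ∈ Algebra.adjoin ℤ ({μ} : Set ℂ) := by
    rw [hχapp]
    rcases quadraticChar_dichotomy hk with h | h <;> rw [h] <;> push_cast
    · exact one_mem _
    · exact neg_mem (one_mem _)
  have hαmem : α ∈ Algebra.adjoin ℤ ({μ} : Set ℂ) := by
    rw [hα]
    exact mul_mem (mul_mem (MulChar.apply_mem_algebraAdjoin_of_pow_eq_one hψ6 hprim6 (-k)) hχmem)
      (jacobiSum_mem_algebraAdjoin_of_pow_eq_one hψ6 hχ6 hprim6)
  have hβmem : β ∈ Algebra.adjoin ℤ ({μ} : Set ℂ) := by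
    rw [hβ, hJ2, hχinv]
    exact mul_mem (mul_mem (MulChar.apply_mem_algebraAdjoin_of_pow_eq_one hψinv6 hprim6 (-k)) hχmem)
      (jacobiSum_mem_algebraAdjoin_of_pow_eq_one hψinv6 hχ6 hprim6)
  -- quadratic relation for μ
  have hquad : μ ^ 2 - μ + 1 = 0 := by
    have h6 : μ ^ 6 = 1 := hprim6.pow_eq_one
    have h3ne : μ ^ 3 ≠ 1 := hprim6.pow_ne_one_of_pos_of_lt (by norm_num) (by norm_num)
    have h2ne : μ ^ 2 ≠ 1 := hprim6.pow_ne_one_of_pos_of_lt (by norm_num) (by norm_num)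
    have h33 : μ ^ 3 = -1 := by
      have hfac : (μ ^ 3 - 1) * (μ ^ 3 + 1) = 0 := by linear_combination h6
      rcases mul_eq_zero.mp hfac with h | h
      · exact absurd (by linear_combination h) h3ne
      · linear_combination h
    have h1ne : μ ≠ -1 := by
      intro h
      exact h2ne (by rw [h]; ring)
    have hfac2 : (μ + 1) * (μ ^ 2 - μ + 1) = 0 := by linear_combination h33
    rcases mul_eq_zero.mp hfac2 with h | h
    · exact absurd (by linear_combination h) h1ne
    · exact h
  -- representation of adjoin elements
  have hrep : ∀ z ∈ Algebra.adjoin ℤ ({μ} : Set ℂ), ∃ m n : ℤ, z = m + n * μ := by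
    intro z hz
    induction hz using Algebra.adjoin_induction with
    | mem x hx =>
      rw [Set.mem_singleton_iff] at hx
      exact ⟨0, 1, by rw [hx]; push_cast; ring⟩
    | algebraMap r => exact ⟨r, 0, by push_cast; simp⟩
    | add x y hx hy ihx ihy =>
      obtain ⟨m1, n1, h1⟩ := ihx
      obtain ⟨m2, n2, h2⟩ := ihy
      exact ⟨m1 + m2, n1 + n2, by rw [h1, h2]; push_cast; ring⟩
    | mul x y hx hy ihx ihy =>
      obtain ⟨m1, n1, h1⟩ := ihx
      obtain ⟨m2, n2, h2⟩ := ihy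
      refine ⟨m1 * m2 - n1 * n2, m1 * n2 + n1 * m2 + n1 * n2, ?_⟩
      rw [h1, h2]
      push_cast
      linear_combination ((n1 : ℂ) * (n2 : ℂ)) * hquad
  obtain ⟨m, n, hmn⟩ := hrep α hαmem
  obtain ⟨m', n', hm'n'⟩ := hrep β hβmem
  -- μ is not real
  have him : μ.im ≠ 0 := by
    intro h0
    have hre : (μ.re : ℂ) = μ := Complex.ext (by simp) (by simp [h0])
    have : ((μ.re ^ 2 - μ.re + 1 : ℝ) : ℂ) = 0 := by push_cast; rw [hre]; exact hquad
    have hr : (μ.re : ℝ) ^ 2 - μ.re + 1 = 0 := by exact_mod_cast this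
    nlinarith [sq_nonneg (2 * μ.re - 1)]
  -- extract integer relations
  have hext : ∀ A B : ℤ, (A : ℂ) + (B : ℂ) * μ = 0 → A = 0 ∧ B = 0 := by
    intro A B hAB
    have him2 := congrArg Complex.im hAB
    simp only [Complex.add_im, Complex.mul_im, Complex.intCast_im, Complex.intCast_re,
      Complex.zero_im, zero_mul, add_zero, zero_add, mul_zero] at him2
    have hB : B = 0 := by
      have : (B : ℝ) = 0 := by
        rcases mul_eq_zero.mp him2 with h | h
        · exact h
        · exact absurd h him
      exact_mod_cast this
    subst hB
    have hre2 := congrArg Complex.re hAB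
    simp only [Complex.add_re, Complex.mul_re, Complex.intCast_re, Complex.intCast_im,
      Complex.zero_re, Int.cast_zero, zero_mul, mul_zero, sub_zero, add_zero, zero_add] at hre2
    constructor
    · exact_mod_cast hre2
    · rfl
  have hsum2 : ((m + m' - S : ℤ) : ℂ) + ((n + n' : ℤ) : ℂ) * μ = 0 := by
    push_cast
    rw [hmn, hm'n'] at hsumαβ
    linear_combination -hsumαβ
  obtain ⟨hA1, hB1⟩ := hext _ _ hsum2
  have hprod2 : ((m * m' - n * n' - p : ℤ) : ℂ) + ((m * n' + n * m' + n * n' : ℤ) : ℂ) * μ = 0 := by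
    push_cast
    rw [hmn, hm'n'] at hαβ
    linear_combination hαβ - ((n : ℂ) * (n' : ℂ)) * hquad
  obtain ⟨hA2, hB2⟩ := hext _ _ hprod2
  -- now pure integer arithmetic
  have hn' : n' = -n := by omega
  subst hn'
  have hmmS : m + m' = S := by omega
  have hpmm : m * m' + n * n = p := by linarith [hA2]
  have hcase : n = 0 ∨ m' = m + n := by
    rcases mul_eq_zero.mp (show n * (m' - m - n) = 0 by linarith [hB2]) with h | h
    · exact Or.inl h
    · right; linarith
  rcases hcase with hn0 | hm'
  · -- n = 0 : leads to contradiction with primality of q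
    exfalso
    subst hn0
    have hpmm' : (p : ℤ) = m * m' := by linarith
    have hpprime : Prime ((p : ℤ)) := Nat.prime_iff_prime_int.mp hp
    rcases hpprime.irreducible.isUnit_or_isUnit hpmm' with hu | hu
    · rcases Int.isUnit_iff.mp hu with h1 | h1
      · subst h1
        have hm' : m' = (p : ℤ) := by linarith
        have : (q : ℤ) = 2 * p + 2 := by omega
        have h2q : 2 ∣ q := by omega
        rcases hq.eq_one_or_self_of_dvd 2 h2q with h | h <;> omega
      · subst h1
        have hm' : m' = -(p : ℤ) := by linarith
        have : (q : ℤ) = 0 := by omega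
        have := hq.pos
        omega
    · rcases Int.isUnit_iff.mp hu with h1 | h1
      · subst h1
        have hm : m = (p : ℤ) := by linarith
        have : (q : ℤ) = 2 * p + 2 := by omega
        have h2q : 2 ∣ q := by omega
        rcases hq.eq_one_or_self_of_dvd 2 h2q with h | h <;> omega
      · subst h1
        have hm : m = -(p : ℤ) := by linarith
        have : (q : ℤ) = 0 := by omega
        have := hq.pos
        omega
  · refine ⟨n, ?_⟩
    subst hm'
    have hpeq : (p : ℤ) = m * m + m * n + n * n := by linarith
    have hs : S = 2 * m + n := by omega
    rw [hs]
    linear_combination 4 * hpeq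


lemma rep_unique {P a b c d : ℤ} (hP : Prime P) (h1 : a ^ 2 + 3 * b ^ 2 = P)
    (h2 : c ^ 2 + 3 * d ^ 2 = P) : a ^ 2 = c ^ 2 := by
  have hP0 : P ≠ 0 := hP.ne_zero
  have hkey : P ∣ (a * d - b * c) * (a * d + b * c) := by
    refine ⟨d ^ 2 - b ^ 2, ?_⟩
    linear_combination d ^ 2 * h1 - b ^ 2 * h2
  have habs : a * d = b * c ∨ a * d = -(b * c) := by
    rcases hP.dvd_mul.mp hkey with h | h
    · left
      obtain ⟨e, he⟩ := h
      have hid1 : P ^ 2 = (a * c + 3 * b * d) ^ 2 + 3 * (P * e) ^ 2 := by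
        linear_combination (-(c ^ 2 + 3 * d ^ 2)) * h1 - P * h2 + 3 * (a * d - b * c + P * e) * he
      have he0 : e = 0 := by
        by_contra he0
        have h1e : 1 ≤ e ^ 2 := by
          rcases lt_or_gt_of_ne he0 with h | h <;> nlinarith
        have hP1 : 1 ≤ P ^ 2 := by
          rcases lt_or_gt_of_ne hP0 with h | h <;> nlinarith
        nlinarith [sq_nonneg (a * c + 3 * b * d), sq_nonneg (P * e)]
      rw [he0, mul_zero] at he
      linarith
    · right
      obtain ⟨e, he⟩ := h
      have hid2 : P ^ 2 = (a * c - 3 * b * d) ^ 2 + 3 * (P * e) ^ 2 := by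
        linear_combination (-(c ^ 2 + 3 * d ^ 2)) * h1 - P * h2 + 3 * (a * d + b * c + P * e) * he
      have he0 : e = 0 := by
        by_contra he0
        have h1e : 1 ≤ e ^ 2 := by
          rcases lt_or_gt_of_ne he0 with h | h <;> nlinarith
        have hP1 : 1 ≤ P ^ 2 := by
          rcases lt_or_gt_of_ne hP0 with h | h <;> nlinarith
        nlinarith [sq_nonneg (a * c - 3 * b * d), sq_nonneg (P * e)]
      rw [he0, mul_zero] at he
      linarith
  have h3 : a ^ 2 * P = c ^ 2 * P := by
    rcases habs with h | h
    · linear_combination c ^ 2 * h1 - a ^ 2 * h2 + 3 * (a * d + b * c) * h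
    · linear_combination c ^ 2 * h1 - a ^ 2 * h2 + 3 * (a * d - b * c) * h
  exact mul_right_cancel₀ hP0 h3

lemma rep_of_four (p : ℕ) (hp : p.Prime) (hp3 : 3 < p) (a b t s : ℤ)
    (hab : (p : ℤ) = a ^ 2 + 3 * b ^ 2) (ha : a % 3 = 2)
    (h4 : 4 * p = t ^ 2 + 3 * s ^ 2) (ht2 : t % 2 = 1) (ht3 : t % 3 = 2) :
    t = a + 3 * b ∨ t = a - 3 * b := by
  have hpodd : p % 2 = 1 := Nat.odd_iff.mp (hp.odd_of_ne_two (by omega))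
  -- s is odd
  have hsodd : s % 2 = 1 := by
    rcases Int.emod_two_eq s with h | h
    · exfalso
      obtain ⟨s', rfl⟩ : ∃ s', s = 2 * s' := ⟨s / 2, by omega⟩
      obtain ⟨t', rfl⟩ : ∃ t', t = 2 * t' + 1 := ⟨(t - 1) / 2, by omega⟩
      have key : 4 * (p : ℤ) = 4 * (t' * t') + 4 * t' + 1 + 12 * (s' * s') := by
        linear_combination h4
      generalize t' * t' = A at key
      generalize s' * s' = B at key
      omega
    · exact h
  -- one of t ± 3s is divisible by 4
  have hdvd : (4 : ℤ) ∣ t + 3 * s ∨ (4 : ℤ) ∣ t - 3 * s := by omega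
  -- normalize the sign of s
  obtain ⟨s₀, hs0sq, hc4⟩ : ∃ s₀ : ℤ, s₀ ^ 2 = s ^ 2 ∧ (4 : ℤ) ∣ t + 3 * s₀ := by
    rcases hdvd with h | h
    · exact ⟨s, rfl, h⟩
    · exact ⟨-s, by ring, by omega⟩
  obtain ⟨c, hc⟩ := hc4
  obtain ⟨d, hd⟩ : ∃ d, t - s₀ = 4 * d := ⟨(t - s₀) / 4, by omega⟩
  have ht : t = c + 3 * d := by omega
  have hs₀ : s₀ = c - d := by omega
  have h44 : 4 * (c ^ 2 + 3 * d ^ 2) = 4 * (p : ℤ) := by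
    linear_combination (-1) * h4 - (t + c + 3 * d) * ht + 3 * hs0sq - 3 * (s₀ + c - d) * hs₀
  have hrep : c ^ 2 + 3 * d ^ 2 = (p : ℤ) := by linarith
  have hc3 : c % 3 = 2 := by omega
  have hPZ : Prime ((p : ℤ)) := Nat.prime_iff_prime_int.mp hp
  have ha2c2 : a ^ 2 = c ^ 2 := rep_unique (b := b) hPZ (by linarith) hrep
  have hb2d2 : b ^ 2 = d ^ 2 := by linarith
  have hac : a = c := by
    have hfac : (a - c) * (a + c) = 0 := by linear_combination ha2c2
    rcases mul_eq_zero.mp hfac with h | h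
    · linarith
    · exfalso; omega
  have hbd : d = b ∨ d = -b := by
    have hfac : (d - b) * (d + b) = 0 := by linear_combination hb2d2.symm
    rcases mul_eq_zero.mp hfac with h | h
    · left; linarith
    · right; linarith
  rcases hbd with h | h
  · left; omega
  · right; omega

lemma step_lemma (p q : ℕ) (hp : p.Prime) (hq : q.Prime) (hp3 : 3 < p) (hq3 : 3 < q)
    (h : ∃ k : ZMod p, k ≠ 0 ∧ Npts p k = q) :
    ∃ t s : ℤ, (q : ℤ) = p + 1 + t ∧ 4 * p = t ^ 2 + 3 * s ^ 2 ∧ t % 2 = 1 ∧ t % 3 = 2 := by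
  haveI : Fact p.Prime := ⟨hp⟩
  obtain ⟨k, hk, hN⟩ := h
  have hcount : (q : ℤ) = p + 1 + ∑ x : ZMod p, quadraticChar (ZMod p) (x ^ 3 + k) := by
    have := count_lemma p hp3 k hk
    rwa [hN] at this
  have hpodd : p % 2 = 1 := Nat.odd_iff.mp (hp.odd_of_ne_two (by omega))
  have hqodd : q % 2 = 1 := Nat.odd_iff.mp (hq.odd_of_ne_two (by omega))
  have hp30 : p % 3 ≠ 0 := by
    intro h0
    rcases hp.eq_one_or_self_of_dvd 3 (by omega) with h | h <;> omega
  have hp312 : p % 3 = 1 ∨ p % 3 = 2 := by omega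
  rcases hp312 with h1 | h2
  · obtain ⟨s, hs⟩ := sum_sq_rep p hp3 h1 k hk q hq hq3 hcount
    refine ⟨(q : ℤ) - p - 1, s, by ring, hs, by omega, ?_⟩
    set t := (q : ℤ) - p - 1 with htdef
    have ht3cases : t % 3 = 0 ∨ t % 3 = 1 ∨ t % 3 = 2 := by omega
    rcases ht3cases with h0 | h1' | h2'
    · exfalso
      obtain ⟨u, hu⟩ : ∃ u, t = 3 * u := ⟨t / 3, by omega⟩
      have key : 4 * (p : ℤ) = 3 * (3 * (u * u) + s * s) := by
        linear_combination hs + (t + 3 * u) * hu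
      generalize 3 * (u * u) + s * s = K at key
      omega
    · exfalso
      obtain ⟨u, hu⟩ : ∃ u, t = 3 * u + 1 := ⟨(t - 1) / 3, by omega⟩
      have key : 4 * (p : ℤ) = 3 * (3 * (u * u) + 2 * u + s * s) + 1 := by
        linear_combination hs + (t + 3 * u + 1) * hu
      generalize 3 * (u * u) + 2 * u + s * s = K at key
      have h3q : 3 ∣ q := by omega
      rcases hq.eq_one_or_self_of_dvd 3 h3q with h | h <;> omega
    · exact h2'
  · exfalso
    have hz := sum_cube_char_eq_zero p hp3 h2 k
    rw [hz] at hcount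
    omega

lemma parity_helper {p : ℕ} (hp : p % 2 = 1) {x y : ℤ} (h : (p : ℤ) = x ^ 2 + 3 * y ^ 2) :
    (x + y) % 2 = 1 := by
  obtain ⟨u, hu⟩ : ∃ u, x = 2 * u + x % 2 := ⟨x / 2, by omega⟩
  obtain ⟨v, hv⟩ : ∃ v, y = 2 * v + y % 2 := ⟨y / 2, by omega⟩
  rcases Int.emod_two_eq x with hx | hx <;> rcases Int.emod_two_eq y with hy | hy <;>
    rw [hx] at hu <;> rw [hy] at hv
  · exfalso
    have key : (p : ℤ) = 2 * (2 * (u * u) + 6 * (v * v)) := by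
      linear_combination h + (x + 2 * u) * hu + 3 * (y + 2 * v) * hv
    omega
  · omega
  · omega
  · exfalso
    have key : (p : ℤ) = 2 * (2 * (u * u) + 2 * u + 6 * (v * v) + 6 * v + 2) := by
      linear_combination h + (x + 2 * u + 1) * hu + 3 * (y + 2 * v + 1) * hv
    omega

lemma next_rep {P Q : ℕ} {x y : ℤ} (hrep : (P : ℤ) = x ^ 2 + 3 * y ^ 2)
    (hx3 : x % 3 = 2) (hxy : (x + y) % 2 = 1) (hQ : (Q : ℤ) = P + 1 + x + 3 * y) :
    ∃ x' y' : ℤ, (Q : ℤ) = x' ^ 2 + 3 * y' ^ 2 ∧ x' % 3 = 2 ∧ (x' + y') % 2 = 1 ∧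
      2 * x' = x - 3 * y - 1 ∧ 2 * y' = x + y + 1 ∧ (Q : ℤ) + 1 + x' - 3 * y' = P := by
  obtain ⟨x', hx'⟩ : ∃ x', x - 3 * y - 1 = 2 * x' := ⟨(x - 3 * y - 1) / 2, by omega⟩
  obtain ⟨y', hy'⟩ : ∃ y', x + y + 1 = 2 * y' := ⟨(x + y + 1) / 2, by omega⟩
  have h4 : 4 * (Q : ℤ) = (2 * x') ^ 2 + 3 * (2 * y') ^ 2 := by
    linear_combination 4 * hQ + 4 * hrep + (x - 3 * y - 1 + 2 * x') * hx'
      + 3 * (x + y + 1 + 2 * y') * hy'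
  refine ⟨x', y', by linarith [h4], by omega, by omega, by omega, by omega, by omega⟩

/-- Theorem 3.6: if `(p₁, p₂, p₃, p₄)` is a proper elliptic list over `3` with
`p₁ = a² + 3b²`, `a ≡ 2 (mod 3)`, then `p₄ = (a + 2)² + 3b²`. -/
theorem stmt_11 (p₁ p₂ p₃ p₄ : ℕ)
    (hp₁ : p₁.Prime) (hp₂ : p₂.Prime) (hp₃ : p₃.Prime) (hp₄ : p₄.Prime)
    (h₁3 : 3 < p₁) (h₂3 : 3 < p₂) (h₃3 : 3 < p₃) (h₄3 : 3 < p₄)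
    (hdist : p₁ ≠ p₂ ∧ p₁ ≠ p₃ ∧ p₁ ≠ p₄ ∧ p₂ ≠ p₃ ∧ p₂ ≠ p₄ ∧ p₃ ≠ p₄)
    (h₁ : ∃ k : ZMod p₁, k ≠ 0 ∧ Npts p₁ k = p₂)
    (h₂ : ∃ k : ZMod p₂, k ≠ 0 ∧ Npts p₂ k = p₃)
    (h₃ : ∃ k : ZMod p₃, k ≠ 0 ∧ Npts p₃ k = p₄)
    (a b : ℤ) (hab : (p₁ : ℤ) = a ^ 2 + 3 * b ^ 2) (ha : a % 3 = 2) :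
    (p₄ : ℤ) = (a + 2) ^ 2 + 3 * b ^ 2 := by
  obtain ⟨h12, h13, h14, h23, h24, h34⟩ := hdist
  have hp₁odd : p₁ % 2 = 1 := Nat.odd_iff.mp (hp₁.odd_of_ne_two (by omega))
  -- step 1
  obtain ⟨t₁, s₁, ht₁, h4₁, ht₁2, ht₁3⟩ := step_lemma p₁ p₂ hp₁ hp₂ h₁3 h₂3 h₁
  obtain ⟨b₁, hb1sq, ht1ab⟩ : ∃ b₁ : ℤ, b₁ ^ 2 = b ^ 2 ∧ t₁ = a + 3 * b₁ := by
    rcases rep_of_four p₁ hp₁ h₁3 a b t₁ s₁ hab ha h4₁ ht₁2 ht₁3 with h | h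
    · exact ⟨b, rfl, h⟩
    · exact ⟨-b, by ring, by omega⟩
  have hrep₁ : (p₁ : ℤ) = a ^ 2 + 3 * b₁ ^ 2 := by rw [hb1sq]; exact hab
  have hpar₁ : (a + b₁) % 2 = 1 := parity_helper hp₁odd hrep₁
  have hQ₁ : (p₂ : ℤ) = p₁ + 1 + a + 3 * b₁ := by omega
  obtain ⟨a₂, b₂, hrep₂, ha₂3, hpar₂, ha₂def, hb₂def, hback₂⟩ :=
    next_rep hrep₁ ha hpar₁ hQ₁
  -- step 2
  obtain ⟨t₂, s₂, ht₂, h4₂, ht₂2, ht₂3⟩ := step_lemma p₂ p₃ hp₂ hp₃ h₂3 h₃3 h₂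
  have ht2ab : t₂ = a₂ + 3 * b₂ := by
    rcases rep_of_four p₂ hp₂ h₂3 a₂ b₂ t₂ s₂ hrep₂ ha₂3 h4₂ ht₂2 ht₂3 with h | h
    · exact h
    · exfalso
      have : (p₃ : ℤ) = p₁ := by omega
      have : p₃ = p₁ := by omega
      omega
  have hQ₂ : (p₃ : ℤ) = p₂ + 1 + a₂ + 3 * b₂ := by omega
  obtain ⟨a₃, b₃, hrep₃, ha₃3, hpar₃, ha₃def, hb₃def, hback₃⟩ :=
    next_rep hrep₂ ha₂3 hpar₂ hQ₂
  -- step 3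
  obtain ⟨t₃, s₃, ht₃, h4₃, ht₃2, ht₃3⟩ := step_lemma p₃ p₄ hp₃ hp₄ h₃3 h₄3 h₃
  have ht3ab : t₃ = a₃ + 3 * b₃ := by
    rcases rep_of_four p₃ hp₃ h₃3 a₃ b₃ t₃ s₃ hrep₃ ha₃3 h4₃ ht₃2 ht₃3 with h | h
    · exact h
    · exfalso
      have : (p₄ : ℤ) = p₂ := by omega
      have : p₄ = p₂ := by omega
      omega
  have hlin : (p₄ : ℤ) = p₁ + 4 * a + 4 := by omega
  linear_combination hlin + hab
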